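/- arXiv:1812.05880 — 2 statements merged into one kernel-verified Lean document; each statement's English description precedes it below -/
import Mathlib

section
/- Let Γ be a finite simple undirected graph with at least 12 vertices, with 1 ≤ |EΓ| ≤ 2|VΓ| + 8 edges, and with maximal valency at most 8. Then either there exist distinct vertices v₁, v₂, v₃, v₄ such that {v₁,v₂} is an edge of Γ but {v₂,v₃}, {v₃,v₄}, {v₄,v₁} are not edges of Γ, or |VΓ| = 12 and Γ is isomorphic to one of K_{4,8}, K₆ ∪ K₆, or K₅ ∪ K₇. -/
set_option maxHeartbeats 1000000

open Finset

section helpers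
variable {V : Type*} [Fintype V] [DecidableEq V]

private lemma exists_side_equiv (X : Finset V) (s t : ℕ) (hs : X.card = s) (ht : Xᶜ.card = t) :
    ∃ e : V ≃ (Fin s ⊕ Fin t), ∀ v, (∃ i, e v = Sum.inl i) ↔ v ∈ X := by
  classical
  have e1 : {v // v ∈ X} ≃ Fin s :=
    Fintype.equivFinOfCardEq (by rw [Fintype.card_coe, hs])
  have e2 : {v // ¬ v ∈ X} ≃ Fin t := by
    refine Fintype.equivFinOfCardEq ?_
    have : {v // ¬ v ∈ X} ≃ {v // v ∈ Xᶜ} :=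
      Equiv.subtypeEquivRight (fun v => (Finset.mem_compl).symm)
    rw [Fintype.card_congr this, Fintype.card_coe, ht]
  refine ⟨(Equiv.sumCompl (· ∈ X)).symm.trans (Equiv.sumCongr e1 e2), fun v => ?_⟩
  by_cases hv : v ∈ X
  · simp [Equiv.sumCompl_symm_apply_of_pos hv, hv]
  · simp [Equiv.sumCompl_symm_apply_of_neg hv, hv]

private lemma iso_cliques (Γ : SimpleGraph V) [DecidableRel Γ.Adj]
    (X : Finset V) (s t : ℕ) (hs : X.card = s) (ht : Xᶜ.card = t)
    (hadj : ∀ u v, Γ.Adj u v ↔ (u ≠ v ∧ (u ∈ X ↔ v ∈ X))) :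
    Nonempty (Γ ≃g ((⊤ : SimpleGraph (Fin s)) ⊕g (⊤ : SimpleGraph (Fin t)))) := by
  obtain ⟨e, he⟩ := exists_side_equiv X s t hs ht
  refine ⟨⟨e, ?_⟩⟩
  intro u v
  rw [hadj u v]
  symm
  have hne : u ≠ v ↔ e u ≠ e v :=
    ⟨fun h h' => h (e.injective h'), fun h h' => h (by rw [h'])⟩
  have hu := he u
  have hv := he v
  rcases hu' : e u with i | i <;> rcases hv' : e v with j | j <;>
      rw [hu'] at hu hne <;> rw [hv'] at hv hne
  · have hux : u ∈ X := hu.mp ⟨i, rfl⟩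
    have hvx : v ∈ X := hv.mp ⟨j, rfl⟩
    simp only [SimpleGraph.sum_adj, SimpleGraph.top_adj]
    constructor
    · rintro ⟨h1, _⟩; intro h; exact (hne.mp h1) (by rw [h])
    · intro h; exact ⟨hne.mpr (by simpa using h), by simp [hux, hvx]⟩
  · have hux : u ∈ X := hu.mp ⟨i, rfl⟩
    have hvx : v ∉ X := fun h => by simpa using hv.mpr h
    simp only [SimpleGraph.sum_adj]
    constructor
    · rintro ⟨_, h2⟩; exact absurd (h2.mp hux) hvx
    · intro h; exact absurd h (by simp)
  · have hux : u ∉ X := fun h => by simpa using hu.mpr h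
    have hvx : v ∈ X := hv.mp ⟨j, rfl⟩
    simp only [SimpleGraph.sum_adj]
    constructor
    · rintro ⟨_, h2⟩; exact absurd (h2.mpr hvx) hux
    · intro h; exact absurd h (by simp)
  · have hux : u ∉ X := fun h => by simpa using hu.mpr h
    have hvx : v ∉ X := fun h => by simpa using hv.mpr h
    simp only [SimpleGraph.sum_adj, SimpleGraph.top_adj]
    constructor
    · rintro ⟨h1, _⟩; intro h; exact (hne.mp h1) (by rw [h])
    · intro h; exact ⟨hne.mpr (by simpa using h), by simp [hux, hvx]⟩

private lemma iso_bipartite (Γ : SimpleGraph V) [DecidableRel Γ.Adj]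
    (X : Finset V) (s t : ℕ) (hs : X.card = s) (ht : Xᶜ.card = t)
    (hadj : ∀ u v, Γ.Adj u v ↔ ¬(u ∈ X ↔ v ∈ X)) :
    Nonempty (Γ ≃g completeBipartiteGraph (Fin s) (Fin t)) := by
  obtain ⟨e, he⟩ := exists_side_equiv X s t hs ht
  refine ⟨⟨e, ?_⟩⟩
  intro u v
  rw [hadj u v]
  symm
  have hu := he u
  have hv := he v
  rcases hu' : e u with i | i <;> rcases hv' : e v with j | j <;>
      rw [hu'] at hu <;> rw [hv'] at hv <;>
      simp only [completeBipartiteGraph_adj] <;> simp_all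

end helpers


/-- Let `Γ` be a finite simple graph with at least 12 vertices, between 1 and
`2|V| + 8` edges, and maximal valency at most 8. Then either there are distinct
vertices `v₁, v₂, v₃, v₄` with `v₁v₂` an edge and `v₂v₃, v₃v₄, v₄v₁` non-edges,
or `|V| = 12` and `Γ` is `K_{4,8}`, `K₆ ∪ K₆`, or `K₅ ∪ K₇`. -/
theorem graph_lemma
    {V : Type*} [Fintype V] [DecidableEq V]
    (Γ : SimpleGraph V) [DecidableRel Γ.Adj]
    (hV : 12 ≤ Fintype.card V)
    (hE1 : 1 ≤ Γ.edgeFinset.card)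
    (hE2 : Γ.edgeFinset.card ≤ 2 * Fintype.card V + 8)
    (hdeg : ∀ v : V, Γ.degree v ≤ 8) :
    (∃ v₁ v₂ v₃ v₄ : V,
        v₁ ≠ v₂ ∧ v₁ ≠ v₃ ∧ v₁ ≠ v₄ ∧ v₂ ≠ v₃ ∧ v₂ ≠ v₄ ∧ v₃ ≠ v₄ ∧
        Γ.Adj v₁ v₂ ∧ ¬Γ.Adj v₂ v₃ ∧ ¬Γ.Adj v₃ v₄ ∧ ¬Γ.Adj v₄ v₁) ∨
    (Fintype.card V = 12 ∧
      (Nonempty (Γ ≃g completeBipartiteGraph (Fin 4) (Fin 8)) ∨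
       Nonempty (Γ ≃g ((⊤ : SimpleGraph (Fin 6)) ⊕g (⊤ : SimpleGraph (Fin 6)))) ∨
       Nonempty (Γ ≃g ((⊤ : SimpleGraph (Fin 5)) ⊕g (⊤ : SimpleGraph (Fin 7)))))) := by
  classical
  by_cases hP : (∃ v₁ v₂ v₃ v₄ : V,
      v₁ ≠ v₂ ∧ v₁ ≠ v₃ ∧ v₁ ≠ v₄ ∧ v₂ ≠ v₃ ∧ v₂ ≠ v₄ ∧ v₃ ≠ v₄ ∧
      Γ.Adj v₁ v₂ ∧ ¬Γ.Adj v₂ v₃ ∧ ¬Γ.Adj v₃ v₄ ∧ ¬Γ.Adj v₄ v₁)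
  · exact Or.inl hP
  right
  push_neg at hP
  set n := Fintype.card V with hn
  set H := Γᶜ with hHdef
  have hHadj : ∀ u v : V, H.Adj u v ↔ u ≠ v ∧ ¬ Γ.Adj u v := fun u v => Γ.compl_adj u v
  have hGadj : ∀ u v : V, u ≠ v → ¬ H.Adj u v → Γ.Adj u v := by
    intro u v h1 h2
    by_contra h3
    exact h2 ((hHadj u v).mpr ⟨h1, h3⟩)
  have hHnA : ∀ u v : V, H.Adj u v → ¬ Γ.Adj u v := fun u v h => ((hHadj u v).mp h).2
  have hclose : ∀ w x y z : V, w ≠ x → w ≠ y → w ≠ z → x ≠ y → x ≠ z → y ≠ z →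
      H.Adj w x → H.Adj x y → H.Adj y z → H.Adj w z := by
    intro w x y z hwx hwy hwz hxy hxz hyz h1 h2 h3
    by_contra hc
    have hzw : Γ.Adj z w := hGadj z w (Ne.symm hwz) (fun h => hc h.symm)
    exact hHnA y z h3
      (hP z w x y (Ne.symm hwz) (Ne.symm hxz) (Ne.symm hyz) hwx hwy hxy hzw
        (hHnA w x h1) (hHnA x y h2))
  have hdegC : ∀ v : V, H.degree v = n - 1 - Γ.degree v := fun v => Γ.degree_compl v
  have hdegG : ∀ v : V, Γ.degree v < n := fun v => Γ.degree_lt_card_verts v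
  have hHdeg : ∀ v : V, n ≤ H.degree v + 9 := by
    intro v
    have h1 := hdegC v
    have h2 := hdeg v
    have h3 := hdegG v
    omega
  have hSum : ∑ v : V, Γ.degree v ≤ 4 * n + 16 := by
    rw [Γ.sum_degrees_eq_twice_card_edges]
    omega
  by_cases hCom : ∃ a b c : V, Γ.Adj a b ∧ H.Adj a c ∧ H.Adj c b
  · -- Case I: the graph is a disjoint union of two cliques
    obtain ⟨a, b, c, hab, hac, hcb⟩ := hCom
    have hneab : a ≠ b := hab.ne
    have hnHab : ¬ H.Adj a b := fun h => hHnA a b h hab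
    set X := H.neighborFinset a with hXdef
    have hmemX : ∀ x, x ∈ X ↔ H.Adj a x := fun x => H.mem_neighborFinset a x
    have hcX : c ∈ X := (hmemX c).mpr hac
    have haX : a ∉ X := fun h => H.loopless.irrefl a ((hmemX a).mp h)
    have hbX : b ∉ X := fun h => hnHab ((hmemX b).mp h)
    have hXcard : X.card = H.degree a := rfl
    have hX3 : 3 ≤ X.card := by have := hHdeg a; omega
    have hXb : ∀ x ∈ X, H.Adj b x := by
      intro x hx
      have hax : H.Adj a x := (hmemX x).mp hx
      by_cases hxc : x = c
      · subst hxc; exact hcb.symm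
      · exact (hclose x a c b hax.ne' hxc (fun h => hbX (h ▸ hx)) hac.ne hneab hcb.ne
          hax.symm hac hcb).symm
    have hbN : ∀ x, H.Adj b x → x ∈ X := by
      intro x hbx
      by_cases hxc : x = c
      · subst hxc; exact hcX
      rw [hmemX]
      refine (hclose x b c a hbx.ne' hxc (fun h => hnHab (h ▸ hbx).symm) hcb.ne'
        (Ne.symm hneab) hac.ne' hbx.symm hcb.symm hac.symm).symm
    have hXind : ∀ x ∈ X, ∀ y ∈ X, ¬ H.Adj x y := by
      intro x hx y hy hxy
      have hax : H.Adj a x := (hmemX x).mp hx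
      have hay : H.Adj a y := (hmemX y).mp hy
      exact hnHab (hclose a x y b hax.ne hay.ne hneab hxy.ne
        (fun h => hbX (h ▸ hx)) (fun h => hbX (h ▸ hy)) hax hxy (hXb y hy).symm)
    set Y := univ.filter (fun y => ∃ x ∈ X, H.Adj y x) with hYdef
    have hmemY : ∀ y, y ∈ Y ↔ ∃ x ∈ X, H.Adj y x := by intro y; simp [hYdef]
    have hYnX : ∀ y ∈ Y, y ∉ X := by
      intro y hy hyX
      obtain ⟨x, hx, hyx⟩ := (hmemY y).mp hy
      exact hXind y hyX x hx hyx
    have haY : a ∈ Y := (hmemY a).mpr ⟨c, hcX, hac⟩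
    have hbY : b ∈ Y := (hmemY b).mpr ⟨c, hcX, hcb.symm⟩
    have hYall : ∀ y ∈ Y, ∀ x ∈ X, H.Adj y x := by
      intro y hy x hx
      obtain ⟨x₀, hx₀, hyx₀⟩ := (hmemY y).mp hy
      by_cases hya : y = a
      · subst hya; exact (hmemX x).mp hx
      by_cases hxx : x = x₀
      · subst hxx; exact hyx₀
      have hyX : y ∉ X := hYnX y hy
      exact hclose y x₀ a x hyx₀.ne hya (fun h => hyX (h ▸ hx))
        (fun h => haX (h ▸ hx₀)) (Ne.symm hxx) (fun h => haX (h ▸ hx))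
        hyx₀ ((hmemX x₀).mp hx₀).symm ((hmemX x).mp hx)
    have hYind : ∀ y ∈ Y, ∀ y' ∈ Y, ¬ H.Adj y y' := by
      intro y hy y' hy' hyy
      obtain ⟨x, hx, x', hx', hxx⟩ := Finset.one_lt_card.mp (by omega : 1 < X.card)
      exact hXind x hx x' hx'
        (hclose x y y' x' (hYall y hy x hx).ne' (hYall y' hy' x hx).ne' hxx hyy.ne
          (fun h => hYnX y hy (h ▸ hx')) (fun h => hYnX y' hy' (h ▸ hx'))
          (hYall y hy x hx).symm hyy (hYall y' hy' x' hx'))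
    have hRnoedge : ∀ u, u ∉ X → u ∉ Y → ∀ v, H.Adj u v → v ∉ X ∧ v ∉ Y := by
      intro u huX huY v huv
      have hvX : v ∉ X := fun hvX => huY ((hmemY u).mpr ⟨v, hvX, huv⟩)
      refine ⟨hvX, fun hvY => ?_⟩
      apply huX
      rw [hmemX]
      by_cases hva : v = a
      · subst hva; exact huv.symm
      · obtain ⟨x, hx⟩ := Finset.card_pos.mp (by omega : 0 < X.card)
        have hvx : H.Adj v x := hYall v hvY x hx
        exact (hclose u v x a huv.ne (fun h => huX (h ▸ hx)) (fun h => huY (h ▸ haY))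
          (fun h => hYnX v hvY (h ▸ hx)) hva (fun h => haX (h ▸ hx))
          huv hvx ((hmemX x).mp hx).symm).symm
    have hNX : ∀ x ∈ X, H.neighborFinset x = Y := by
      intro x hx
      ext v
      rw [SimpleGraph.mem_neighborFinset]
      constructor
      · intro h; exact (hmemY v).mpr ⟨x, hx, h.symm⟩
      · intro hv; exact (hYall v hv x hx).symm
    have hNY : ∀ y ∈ Y, H.neighborFinset y = X := by
      intro y hy
      ext v
      rw [SimpleGraph.mem_neighborFinset]
      constructor
      · intro h
        by_contra hvX
        by_cases hvY : v ∈ Y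
        · exact hYind y hy v hvY h
        · exact (hRnoedge v hvX hvY y h.symm).2 hy
      · intro hv; exact hYall y hy v hv
    have hdegX : ∀ x ∈ X, H.degree x = Y.card := by
      intro x hx
      show (H.neighborFinset x).card = Y.card
      rw [hNX x hx]
    have hdegY : ∀ y ∈ Y, H.degree y = X.card := by
      intro y hy
      show (H.neighborFinset y).card = X.card
      rw [hNY y hy]
    have hYsub : Y ⊆ Xᶜ := fun y hy => Finset.mem_compl.mpr (hYnX y hy)
    set R := Xᶜ \ Y with hRdef
    have hmemR : ∀ u, u ∈ R ↔ (u ∉ X ∧ u ∉ Y) := by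
      intro u; simp [hRdef, Finset.mem_sdiff, Finset.mem_compl]
    have hpart : X.card + (R.card + Y.card) = n := by
      have h1 := X.card_add_card_compl
      have h2 : R.card + Y.card = Xᶜ.card := by
        rw [hRdef]; exact Finset.card_sdiff_add_card_eq_card hYsub
      omega
    have hXcardge : n ≤ X.card + 9 := by have := hHdeg a; omega
    have hYcardge : n ≤ Y.card + 9 := by
      obtain ⟨x, hx⟩ := Finset.card_pos.mp (by omega : 0 < X.card)
      have h1 := hHdeg x
      have h2 := hdegX x hx
      omega
    have hR0 : R = ∅ := by
      by_contra hne
      obtain ⟨u, hu⟩ := Finset.nonempty_iff_ne_empty.mpr hne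
      obtain ⟨huX, huY⟩ := (hmemR u).mp hu
      have hNR : ∀ w ∈ R, H.neighborFinset w ⊆ R.erase w := by
        intro w hw v hv
        rw [SimpleGraph.mem_neighborFinset] at hv
        obtain ⟨hw1, hw2⟩ := (hmemR w).mp hw
        obtain ⟨h1, h2⟩ := hRnoedge w hw1 hw2 v hv
        exact Finset.mem_erase.mpr ⟨hv.ne', (hmemR v).mpr ⟨h1, h2⟩⟩
      have hdegR : ∀ w ∈ R, H.degree w + 1 ≤ R.card := by
        intro w hw
        have h1 := Finset.card_le_card (hNR w hw)
        have h2 : (R.erase w).card = R.card - 1 := Finset.card_erase_of_mem hw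
        have h3 : 0 < R.card := Finset.card_pos.mpr ⟨w, hw⟩
        have h4 : H.degree w = (H.neighborFinset w).card := rfl
        omega
    -- ## degree lower bounds
      have hdg1 : ∀ x ∈ X, n - 1 - Y.card ≤ Γ.degree x := by
        intro x hx
        have h1 := hdegC x
        have h2 := hdegX x hx
        have h3 := hdegG x
        omega
      have hdg2 : ∀ y ∈ Y, n - 1 - X.card ≤ Γ.degree y := by
        intro y hy
        have h1 := hdegC y
        have h2 := hdegY y hy
        have h3 := hdegG y
        omega
      have hdg3 : ∀ w ∈ R, n - R.card ≤ Γ.degree w := by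
        intro w hw
        have h1 := hdegC w
        have h2 := hdegR w hw
        have h3 := hdegG w
        omega
      have hsplit : ∑ v ∈ X, Γ.degree v + (∑ v ∈ R, Γ.degree v + ∑ v ∈ Y, Γ.degree v)
          = ∑ v : V, Γ.degree v := by
        rw [Finset.sum_sdiff hYsub]
        exact Finset.sum_add_sum_compl X _
      have hb1 : X.card * (n - 1 - Y.card) ≤ ∑ v ∈ X, Γ.degree v := by
        have := Finset.card_nsmul_le_sum X (fun v => Γ.degree v) (n - 1 - Y.card) hdg1
        simpa [smul_eq_mul] using this
      have hb2 : Y.card * (n - 1 - X.card) ≤ ∑ v ∈ Y, Γ.degree v := by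
        have := Finset.card_nsmul_le_sum Y (fun v => Γ.degree v) (n - 1 - X.card) hdg2
        simpa [smul_eq_mul] using this
      have hb3 : R.card * (n - R.card) ≤ ∑ v ∈ R, Γ.degree v := by
        have := Finset.card_nsmul_le_sum R (fun v => Γ.degree v) (n - R.card) hdg3
        simpa [smul_eq_mul] using this
      have hrge : n ≤ R.card + 8 := by
        have h1 := hdegR u hu
        have h2 := hHdeg u
        omega
      -- abbreviate
      have hs3 : 3 ≤ X.card := hX3
      have hs5 : X.card ≤ 5 := by omega
      have ht3 : 3 ≤ Y.card := by omega
      have ht5 : Y.card ≤ 5 := by omega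
      have hr4 : 4 ≤ R.card := by omega
      have e1 : n - 1 - Y.card = X.card + R.card - 1 := by omega
      have e2 : n - 1 - X.card = Y.card + R.card - 1 := by omega
      have e3 : n - R.card = X.card + Y.card := by omega
      rw [e1] at hb1
      rw [e2] at hb2
      rw [e3] at hb3
      have hkey : X.card * (X.card + R.card - 1) + Y.card * (Y.card + R.card - 1)
          + R.card * (X.card + Y.card) ≤ 4 * (X.card + Y.card + R.card) + 16 := by
        have h4 : 4 * n + 16 = 4 * (X.card + Y.card + R.card) + 16 := by omega
        omega
      clear_value X Y  -- maybe unnecessary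
      interval_cases h : X.card <;> interval_cases h2 : Y.card <;> omega
    -- ## R is empty: two cliques
    have hXc : Xᶜ = Y := by
      apply Finset.Subset.antisymm _ hYsub
      have : Xᶜ \ Y = ∅ := hR0
      exact Finset.sdiff_eq_empty_iff_subset.mp this
    have hadjchar : ∀ u v, Γ.Adj u v ↔ (u ≠ v ∧ (u ∈ X ↔ v ∈ X)) := by
      intro u v
      constructor
      · intro h
        refine ⟨h.ne, ?_⟩
        constructor
        · intro hu
          by_contra hv
          have hvY : v ∈ Y := hXc ▸ Finset.mem_compl.mpr hv
          exact hHnA v u (hYall v hvY u hu) h.symm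
        · intro hv
          by_contra hu
          have huY : u ∈ Y := hXc ▸ Finset.mem_compl.mpr hu
          exact hHnA u v (hYall u huY v hv) h
      · rintro ⟨hne, hiff⟩
        by_cases hu : u ∈ X
        · exact hGadj u v hne (fun h => hXind u hu v (hiff.mp hu) h)
        · have huY : u ∈ Y := hXc ▸ Finset.mem_compl.mpr hu
          have hvY : v ∈ Y := hXc ▸ Finset.mem_compl.mpr (fun h => hu (hiff.mpr h))
          exact hGadj u v hne (fun h => hYind u huY v hvY h)
    have hstn : X.card + Y.card = n := by
      have h1 := X.card_add_card_compl
      rw [hXc] at h1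
      exact h1
    have hb1 : ∑ v ∈ X, Γ.degree v = X.card * (X.card - 1) := by
      apply Finset.sum_const_nat
      intro x hx
      have h1 := hdegC x
      have h2 := hdegX x hx
      have h3 := hdegG x
      omega
    have hb2 : ∑ v ∈ Y, Γ.degree v = Y.card * (Y.card - 1) := by
      apply Finset.sum_const_nat
      intro y hy
      have h1 := hdegC y
      have h2 := hdegY y hy
      have h3 := hdegG y
      omega
    have hsum2 : X.card * (X.card - 1) + Y.card * (Y.card - 1) ≤ 4 * n + 16 := by
      have hsplit := Finset.sum_add_sum_compl X (fun v => Γ.degree v)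
      rw [hXc, hb1, hb2] at hsplit
      omega
    have hs9 : X.card ≤ 9 := by omega
    have ht9 : Y.card ≤ 9 := by omega
    have hs3 : 3 ≤ X.card := hX3
    have ht3 : 3 ≤ Y.card := by omega
    have hfin : n = 12 ∧ ((X.card = 6 ∧ Y.card = 6) ∨ (X.card = 5 ∧ Y.card = 7) ∨
        (X.card = 7 ∧ Y.card = 5)) := by
      clear_value X Y
      constructor
      · interval_cases h : X.card <;> interval_cases h2 : Y.card <;> omega
      · interval_cases h : X.card <;> interval_cases h2 : Y.card <;> omega
    obtain ⟨hn12, hcases⟩ := hfin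
    refine ⟨hn12, ?_⟩
    have hXcc : Xᶜ.card = Y.card := by rw [hXc]
    rcases hcases with ⟨h6, h6'⟩ | ⟨h5, h7⟩ | ⟨h7, h5⟩
    · exact Or.inr (Or.inl (iso_cliques Γ X 6 6 h6 (by omega) hadjchar))
    · exact Or.inr (Or.inr (iso_cliques Γ X 5 7 h5 (by omega) hadjchar))
    · refine Or.inr (Or.inr (iso_cliques Γ Xᶜ 5 7 (by omega) ?_ ?_))
      · rw [compl_compl]; omega
      · intro u v
        rw [hadjchar u v]
        simp only [Finset.mem_compl]
        rw [not_iff_not]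
  · -- Case II: complete bipartite
    have htrans : ∀ u x w : V, H.Adj u x → H.Adj x w → u = w ∨ H.Adj u w := by
      intro u x w h1 h2
      by_cases huw : u = w
      · exact Or.inl huw
      right
      by_contra hc
      exact hCom ⟨u, w, x, hGadj u w huw hc, h1, h2⟩
    obtain ⟨a, b, hab⟩ : ∃ a b : V, Γ.Adj a b := by
      obtain ⟨e, he⟩ := Finset.card_pos.mp (by omega : 0 < Γ.edgeFinset.card)
      rw [SimpleGraph.mem_edgeFinset] at he
      obtain ⟨x, y, he⟩ := Sym2.exists.mp ⟨e, he⟩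
      exact ⟨x, y, Γ.mem_edgeSet.mp he⟩
    have hmemC : ∀ v u : V, u ∈ insert v (H.neighborFinset v) ↔ (u = v ∨ H.Adj v u) := by
      intro v u; simp [Finset.mem_insert, SimpleGraph.mem_neighborFinset]
    have hccard : ∀ v : V, n ≤ (insert v (H.neighborFinset v)).card + 8 := by
      intro v
      rw [Finset.card_insert_of_notMem
        (fun h => H.loopless.irrefl v ((H.mem_neighborFinset v v).mp h))]
      have h1 := hHdeg v
      have h2 : H.degree v = (H.neighborFinset v).card := rfl
      omega
    have hselfC : ∀ v : V, v ∈ insert v (H.neighborFinset v) := fun v =>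
      Finset.mem_insert_self v _
    have hclosed : ∀ v x y : V, x ∈ insert v (H.neighborFinset v) → H.Adj x y →
        y ∈ insert v (H.neighborFinset v) := by
      intro v x y hx hxy
      rw [hmemC] at hx ⊢
      rcases hx with rfl | hvx
      · exact Or.inr hxy
      · rcases htrans v x y hvx hxy with rfl | h
        · exact Or.inl rfl
        · exact Or.inr h
    have hCadj : ∀ v x y : V, x ∈ insert v (H.neighborFinset v) →
        y ∈ insert v (H.neighborFinset v) → x ≠ y → H.Adj x y := by
      intro v x y hx hy hne
      rw [hmemC] at hx hy
      rcases hx with rfl | hvx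
      · rcases hy with rfl | hvy
        · exact absurd rfl hne
        · exact hvy
      · rcases hy with rfl | hvy
        · exact hvx.symm
        · rcases htrans x v y hvx.symm hvy with rfl | h
          · exact absurd rfl hne
          · exact h
    have hdisj : ∀ u v : V, ¬ H.Adj u v → u ≠ v →
        Disjoint (insert u (H.neighborFinset u)) (insert v (H.neighborFinset v)) := by
      intro u v hnadj hne
      rw [Finset.disjoint_left]
      intro w hwu hwv
      by_cases hwu' : w = u
      · subst hwu'
        rcases (hmemC v w).mp hwv with rfl | h
        · exact hne rfl
        · exact hnadj h.symm
      · have huw := ((hmemC u w).mp hwu).resolve_left hwu'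
        by_cases hwv' : w = v
        · subst hwv'; exact hnadj huw
        · have hvw := ((hmemC v w).mp hwv).resolve_left hwv'
          rcases htrans u w v huw hvw.symm with rfl | h
          · exact hne rfl
          · exact hnadj h
    have hCaCb := hdisj a b (fun h => hHnA a b h hab) hab.ne
    have hGcross : ∀ u v x y : V, Disjoint (insert u (H.neighborFinset u))
        (insert v (H.neighborFinset v)) → x ∈ insert u (H.neighborFinset u) →
        y ∈ insert v (H.neighborFinset v) → Γ.Adj x y := by
      intro u v x y hd hx hy
      have hne : x ≠ y := fun h => Finset.disjoint_left.mp hd hx (h ▸ hy)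
      refine hGadj x y hne (fun h => ?_)
      exact Finset.disjoint_left.mp hd (hclosed u x y hx h) hy
    by_cases hthree : ∃ w : V, w ∉ insert a (H.neighborFinset a) ∪ insert b (H.neighborFinset b)
    · exfalso
      obtain ⟨w, hw⟩ := hthree
      rw [Finset.mem_union] at hw
      push_neg at hw
      obtain ⟨hwa, hwb⟩ := hw
      have hwa' : ¬ H.Adj a w := fun h => hwa ((hmemC a w).mpr (Or.inr h))
      have hwane : a ≠ w := fun h => hwa ((hmemC a w).mpr (Or.inl h.symm))
      have hwb' : ¬ H.Adj b w := fun h => hwb ((hmemC b w).mpr (Or.inr h))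
      have hwbne : b ≠ w := fun h => hwb ((hmemC b w).mpr (Or.inl h.symm))
      have hd1 := hdisj a w hwa' hwane
      have hd2 := hdisj b w hwb' hwbne
      have hd3 : Disjoint (insert a (H.neighborFinset a) ∪ insert b (H.neighborFinset b))
          (insert w (H.neighborFinset w)) := Finset.disjoint_union_left.mpr ⟨hd1, hd2⟩
      have hcardu : ((insert a (H.neighborFinset a) ∪ insert b (H.neighborFinset b))
          ∪ insert w (H.neighborFinset w)).card
          = (insert a (H.neighborFinset a)).card + (insert b (H.neighborFinset b)).card
            + (insert w (H.neighborFinset w)).card := by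
        rw [Finset.card_union_of_disjoint hd3, Finset.card_union_of_disjoint hCaCb]
      have hle : ((insert a (H.neighborFinset a) ∪ insert b (H.neighborFinset b))
          ∪ insert w (H.neighborFinset w)).card ≤ n :=
        (Finset.card_le_card (Finset.subset_univ _)).trans_eq (Finset.card_univ)
      have hca := hccard a
      have hcb := hccard b
      have hcw := hccard w
      have huniv : (insert a (H.neighborFinset a) ∪ insert b (H.neighborFinset b))
          ∪ insert w (H.neighborFinset w) = univ := by
        apply Finset.eq_univ_of_card
        rw [← hn]
        omega
      have hdeg8 : ∀ x : V, 8 ≤ Γ.degree x := by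
        intro x
        have hx : x ∈ (insert a (H.neighborFinset a) ∪ insert b (H.neighborFinset b))
            ∪ insert w (H.neighborFinset w) := huniv ▸ Finset.mem_univ x
        rw [Finset.mem_union, Finset.mem_union] at hx
        have key : ∀ u v : V, x ∈ insert u (H.neighborFinset u) →
            Disjoint (insert u (H.neighborFinset u)) (insert v (H.neighborFinset v)) →
            ∀ u' v' : V, x ∈ insert u (H.neighborFinset u) →
            Disjoint (insert u (H.neighborFinset u)) (insert u' (H.neighborFinset u')) →
            Disjoint (insert v (H.neighborFinset v)) (insert u' (H.neighborFinset u')) →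
            True := fun _ _ _ _ _ _ _ _ _ => trivial
        -- x is adjacent to the two classes it is not in
        rcases hx with (hx | hx) | hx
        · have hsub : insert b (H.neighborFinset b) ∪ insert w (H.neighborFinset w)
              ⊆ Γ.neighborFinset x := by
            intro y hy
            rw [SimpleGraph.mem_neighborFinset]
            rcases Finset.mem_union.mp hy with hy | hy
            · exact hGcross a b x y hCaCb hx hy
            · exact hGcross a w x y hd1 hx hy
          have hc8 : (insert b (H.neighborFinset b) ∪ insert w (H.neighborFinset w)).card = 8 := by
            rw [Finset.card_union_of_disjoint (Finset.disjoint_union_left.mp hd3).2]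
            omega
          have := Finset.card_le_card hsub
          have hdd : Γ.degree x = (Γ.neighborFinset x).card := rfl
          omega
        · have hsub : insert a (H.neighborFinset a) ∪ insert w (H.neighborFinset w)
              ⊆ Γ.neighborFinset x := by
            intro y hy
            rw [SimpleGraph.mem_neighborFinset]
            rcases Finset.mem_union.mp hy with hy | hy
            · exact hGcross b a x y hCaCb.symm hx hy
            · exact hGcross b w x y hd2 hx hy
          have hc8 : (insert a (H.neighborFinset a) ∪ insert w (H.neighborFinset w)).card = 8 := by
            rw [Finset.card_union_of_disjoint (Finset.disjoint_union_left.mp hd3).1]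
            omega
          have := Finset.card_le_card hsub
          have hdd : Γ.degree x = (Γ.neighborFinset x).card := rfl
          omega
        · have hsub : insert a (H.neighborFinset a) ∪ insert b (H.neighborFinset b)
              ⊆ Γ.neighborFinset x := by
            intro y hy
            rw [SimpleGraph.mem_neighborFinset]
            rcases Finset.mem_union.mp hy with hy | hy
            · exact hGcross w a x y hd1.symm hx hy
            · exact hGcross w b x y hd2.symm hx hy
          have hc8 : (insert a (H.neighborFinset a) ∪ insert b (H.neighborFinset b)).card = 8 := by
            rw [Finset.card_union_of_disjoint hCaCb]
            omega
          have := Finset.card_le_card hsub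
          have hdd : Γ.degree x = (Γ.neighborFinset x).card := rfl
          omega
      have hbig : (univ : Finset V).card * 8 ≤ ∑ v : V, Γ.degree v := by
        have := Finset.card_nsmul_le_sum univ (fun v => Γ.degree v) 8
          (fun x _ => hdeg8 x)
        simpa [smul_eq_mul] using this
      rw [Finset.card_univ] at hbig
      omega
    · push_neg at hthree
      have hcompl : (insert a (H.neighborFinset a))ᶜ = insert b (H.neighborFinset b) := by
        ext v
        rw [Finset.mem_compl]
        constructor
        · intro hv
          exact (Finset.mem_union.mp (hthree v)).resolve_left hv
        · intro hv hv'
          exact Finset.disjoint_left.mp hCaCb hv' hv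
      have hmemB : ∀ w : V, w ∈ insert b (H.neighborFinset b) ↔
          w ∉ insert a (H.neighborFinset a) := by
        intro w; rw [← hcompl, Finset.mem_compl]
      have hadjchar : ∀ u v, Γ.Adj u v ↔
          ¬(u ∈ insert a (H.neighborFinset a) ↔ v ∈ insert a (H.neighborFinset a)) := by
        intro u v
        constructor
        · intro h hiff
          by_cases hu : u ∈ insert a (H.neighborFinset a)
          · exact hHnA u v (hCadj a u v hu (hiff.mp hu) h.ne) h
          · have hub : u ∈ insert b (H.neighborFinset b) := (hmemB u).mpr hu
            have hvb : v ∈ insert b (H.neighborFinset b) :=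
              (hmemB v).mpr (fun hv => hu (hiff.mpr hv))
            exact hHnA u v (hCadj b u v hub hvb h.ne) h
        · intro hiff
          have hne : u ≠ v := by rintro rfl; exact hiff Iff.rfl
          refine hGadj u v hne (fun hH => hiff ?_)
          constructor
          · intro hu; exact hclosed a u v hu hH
          · intro hv; exact hclosed a v u hv hH.symm
      have hpq : (insert a (H.neighborFinset a)).card
          + (insert b (H.neighborFinset b)).card = n := by
        have h1 := (insert a (H.neighborFinset a)).card_add_card_compl
        rw [hcompl] at h1
        exact h1
      have hdegA : ∀ u ∈ insert a (H.neighborFinset a),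
          Γ.degree u = (insert b (H.neighborFinset b)).card := by
        intro u hu
        have hNu : Γ.neighborFinset u = insert b (H.neighborFinset b) := by
          ext v
          rw [SimpleGraph.mem_neighborFinset, hadjchar, hmemB]
          constructor
          · intro h hv
            exact h ⟨fun _ => hv, fun _ => hu⟩
          · intro hv hiff
            exact hv (hiff.mp hu)
        show (Γ.neighborFinset u).card = _
        rw [hNu]
      have hdegB : ∀ u ∈ insert b (H.neighborFinset b),
          Γ.degree u = (insert a (H.neighborFinset a)).card := by
        intro u hu
        have hNu : Γ.neighborFinset u = insert a (H.neighborFinset a) := by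
          ext v
          rw [SimpleGraph.mem_neighborFinset, hadjchar]
          constructor
          · intro h
            by_contra hv
            exact h ⟨fun hu' => absurd hu' ((hmemB u).mp hu), fun hv' => absurd hv' hv⟩
          · intro hv hiff
            exact ((hmemB u).mp hu) (hiff.mpr hv)
        show (Γ.neighborFinset u).card = _
        rw [hNu]
      have hbA : ∑ v ∈ insert a (H.neighborFinset a), Γ.degree v
          = (insert a (H.neighborFinset a)).card * (insert b (H.neighborFinset b)).card :=
        Finset.sum_const_nat hdegA
      have hbB : ∑ v ∈ (insert a (H.neighborFinset a))ᶜ, Γ.degree v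
          = (insert b (H.neighborFinset b)).card * (insert a (H.neighborFinset a)).card := by
        rw [hcompl]
        exact Finset.sum_const_nat hdegB
      have hsum2 : (insert a (H.neighborFinset a)).card * (insert b (H.neighborFinset b)).card
          + (insert b (H.neighborFinset b)).card * (insert a (H.neighborFinset a)).card
          ≤ 4 * n + 16 := by
        have hsplit := Finset.sum_add_sum_compl (insert a (H.neighborFinset a))
          (fun v => Γ.degree v)
        rw [hbA, hbB] at hsplit
        omega
      have hA8 : (insert a (H.neighborFinset a)).card ≤ 8 := by
        have h1 := hdegB b (hselfC b)
        have h2 := hdeg b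
        omega
      have hB8 : (insert b (H.neighborFinset b)).card ≤ 8 := by
        have h1 := hdegA a (hselfC a)
        have h2 := hdeg a
        omega
      have hA4 : 4 ≤ (insert a (H.neighborFinset a)).card := by
        have := hccard a; omega
      have hB4 : 4 ≤ (insert b (H.neighborFinset b)).card := by
        have := hccard b; omega
      have hfin : n = 12 ∧ (((insert a (H.neighborFinset a)).card = 4
            ∧ (insert b (H.neighborFinset b)).card = 8)
          ∨ ((insert a (H.neighborFinset a)).card = 8
            ∧ (insert b (H.neighborFinset b)).card = 4)) := by
        set p := (insert a (H.neighborFinset a)).card with hp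
        set q := (insert b (H.neighborFinset b)).card with hq
        clear_value p q
        constructor
        · interval_cases p <;> interval_cases q <;> omega
        · interval_cases p <;> interval_cases q <;> omega
      refine ⟨hfin.1, Or.inl ?_⟩
      rcases hfin.2 with ⟨h4, h8⟩ | ⟨h8, h4⟩
      · exact iso_bipartite Γ (insert a (H.neighborFinset a)) 4 8 h4
          (by rw [hcompl]; exact h8) hadjchar
      · refine iso_bipartite Γ (insert b (H.neighborFinset b)) 4 8 h4 ?_ ?_
        · have hcc : (insert b (H.neighborFinset b))ᶜ = insert a (H.neighborFinset a) := by
            rw [← hcompl, compl_compl]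
          rw [hcc]; exact h8
        · intro u v
          rw [hadjchar u v]
          apply not_congr
          rw [hmemB u, hmemB v, not_iff_not]
end

section
/- Let G be an almost quasisimple group, q a prime power, and V a faithful irreducible F_q G-module. If G has no regular orbits on V, then dim_{F_q}(V) ≤ r(G)·log_q|G|, where r(G) = max{r(g) : g ∈ G \ Z(G)}. -/
open Subgroup Pointwise
open scoped commutatorElement

/-- `rElt T x` is the minimal number `r` of `T`-conjugates of `x` that generate the
subgroup `⟨T, x⟩`. -/
noncomputable def rElt {Q : Type*} [Group Q] (T : Subgroup Q) (x : Q) : ℕ :=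
  sInf {m : ℕ | ∃ c : Fin m → Q,
    (∀ i, ∃ t ∈ T, c i = t * x * t⁻¹) ∧
    Subgroup.closure (Set.range c) = T ⊔ Subgroup.zpowers x}

section Aux
variable {Q : Type*} [Group Q] [Finite Q] (T : Subgroup Q) [T.Normal] [IsSimpleGroup T]

/-- The defining set of `rElt` contains `Nat.card T` for any `x ≠ 1`, provided the
centralizer of `T` is trivial. -/
theorem card_mem_rSet (hTc : Subgroup.centralizer (T : Set Q) = ⊥) (x : Q) (hx : x ≠ 1) :
    (Nat.card T) ∈ {m : ℕ | ∃ c : Fin m → Q,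
      (∀ i, ∃ t ∈ T, c i = t * x * t⁻¹) ∧
      Subgroup.closure (Set.range c) = T ⊔ Subgroup.zpowers x} := by
  have hpos : Nat.card T ≠ 0 := Nat.card_ne_zero.mpr ⟨inferInstance, inferInstance⟩
  let e : T ≃ Fin (Nat.card T) := Nat.equivFinOfCardPos hpos
  set c : Fin (Nat.card T) → Q := fun i => (e.symm i : Q) * x * (e.symm i : Q)⁻¹ with hc
  refine ⟨c, fun i => ⟨e.symm i, (e.symm i).2, rfl⟩, ?_⟩
  set H0 := Subgroup.closure (Set.range c) with hH0
  -- range of c is the set of all T-conjugates of x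
  have hranc : ∀ t : T, (t : Q) * x * (t : Q)⁻¹ ∈ H0 := by
    intro t
    refine Subgroup.subset_closure ⟨e t, ?_⟩
    simp [hc]
  have hconjT : ∀ t ∈ T, ∀ h ∈ H0, t * h * t⁻¹ ∈ H0 := by
    intro t ht h hh
    have : H0.map (MulAut.conj t).toMonoidHom ≤ H0 := by
      rw [hH0, MonoidHom.map_closure]
      apply Subgroup.closure_mono
      rintro - ⟨-, ⟨i, rfl⟩, rfl⟩
      have : (MulAut.conj t).toMonoidHom (c i)
          = ((⟨t, ht⟩ * e.symm i : T) : Q) * x * ((⟨t, ht⟩ * e.symm i : T) : Q)⁻¹ := by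
        simp only [hc, MulAut.conj_apply, MulEquiv.coe_toMonoidHom, Subgroup.coe_mul]
        group
      rw [this]
      exact ⟨e (⟨t, ht⟩ * e.symm i), by simp [hc]⟩
    exact this ⟨h, hh, rfl⟩
  -- now the simplicity argument
  have hsub : H0.subgroupOf T = ⊥ ∨ H0.subgroupOf T = ⊤ := by
    refine IsSimpleGroup.eq_bot_or_eq_top_of_normal _ ⟨?_⟩
    rintro ⟨n, hnT⟩ hn ⟨t, htT⟩
    simp only [Subgroup.mem_subgroupOf] at hn ⊢
    exact hconjT t htT n hn
  have hle : H0 ≤ T ⊔ Subgroup.zpowers x := by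
    rw [hH0, Subgroup.closure_le]
    rintro - ⟨i, rfl⟩
    exact mul_mem (mul_mem (le_sup_left (α := Subgroup Q) (e.symm i).2)
      (le_sup_right (α := Subgroup Q) (Subgroup.mem_zpowers x)))
      (inv_mem (le_sup_left (α := Subgroup Q) (e.symm i).2))
  rcases hsub with hbot | htop
  · exfalso
    rw [Subgroup.subgroupOf_eq_bot, Subgroup.disjoint_def] at hbot
    have hcent : H0 ≤ Subgroup.centralizer (T : Set Q) := by
      intro h hh
      rw [Subgroup.mem_centralizer_iff]
      intro t htT
      have h1 : h * t * h⁻¹ * t⁻¹ ∈ T :=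
        mul_mem (Subgroup.Normal.conj_mem ‹T.Normal› t htT h) (inv_mem htT)
      have h2 : h * t * h⁻¹ * t⁻¹ ∈ H0 := by
        have := hconjT t htT h⁻¹ (inv_mem hh)
        have := mul_mem hh this
        convert this using 1
        group
      have h3 : h * t * h⁻¹ * t⁻¹ = 1 := hbot h2 h1
      have h4 : h * t * h⁻¹ = t := by rwa [mul_inv_eq_one] at h3
      calc t * h = (h * t * h⁻¹) * h := by rw [h4]
        _ = h * t := by group
    have hH0bot : H0 = ⊥ := le_bot_iff.mp (hTc ▸ hcent)
    obtain ⟨i⟩ : Nonempty (Fin (Nat.card T)) := ⟨⟨0, Nat.pos_of_ne_zero hpos⟩⟩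
    have hci : c i ∈ H0 := Subgroup.subset_closure ⟨i, rfl⟩
    rw [hH0bot, Subgroup.mem_bot] at hci
    exact hx (by simpa [hc, conj_eq_one_iff] using hci)
  · -- T ≤ H0
    have hTle : T ≤ H0 := Subgroup.subgroupOf_eq_top.mp htop
    have hxmem : x ∈ H0 := by
      obtain ⟨i⟩ : Nonempty (Fin (Nat.card T)) := ⟨⟨0, Nat.pos_of_ne_zero hpos⟩⟩
      have hci : c i ∈ H0 := Subgroup.subset_closure ⟨i, rfl⟩
      have hsi : ((e.symm i : T) : Q) ∈ H0 := hTle (e.symm i).2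
      have : ((e.symm i : T) : Q)⁻¹ * c i * ((e.symm i : T) : Q) = x := by
        simp only [hc]; group
      rw [← this]
      exact mul_mem (mul_mem (inv_mem hsi) hci) hsi
    exact le_antisymm hle (sup_le hTle ((Subgroup.zpowers_le).mpr hxmem))
end Aux


section ModAux
variable {G : Type*} [Group G] (F : Type*) [Field F]
    (V : Type*) [AddCommGroup V] [Module F V]
    [DistribMulAction G V] [SMulCommClass G F V]

/-- Fixed-point subspace of a group element. -/
def fixS (g : G) : Submodule F V where
  carrier := {v | g • v = v}
  add_mem' := by intro a b ha hb; simp only [Set.mem_setOf_eq, smul_add] at *; rw [ha, hb]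
  zero_mem' := smul_zero g
  smul_mem' := by intro a v hv; simp only [Set.mem_setOf_eq] at *; rw [smul_comm, hv]

@[simp] lemma mem_fixS {g : G} {v : V} : v ∈ fixS F V g ↔ g • v = v := Iff.rfl

lemma fixS_conj (s g : G) :
    fixS F V (s * g * s⁻¹) = (fixS F V g).map (DistribMulAction.toLinearEquiv F V s : V →ₗ[F] V) := by
  ext v
  simp only [mem_fixS, Submodule.mem_map, LinearEquiv.coe_coe,
    DistribMulAction.toLinearEquiv_apply]
  constructor
  · intro hv
    refine ⟨s⁻¹ • v, ?_, smul_inv_smul s v⟩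
    show g • s⁻¹ • v = s⁻¹ • v
    conv_rhs => rw [← hv]
    simp [mul_smul, inv_smul_smul]
  · rintro ⟨w, hw, rfl⟩
    simp [mul_smul, inv_smul_smul, hw]

lemma finrank_fixS_conj [FiniteDimensional F V] (s g : G) :
    Module.finrank F (fixS F V (s * g * s⁻¹)) = Module.finrank F (fixS F V g) := by
  rw [fixS_conj]
  exact LinearEquiv.finrank_map_eq _ _

/-- Generic codimension counting for intersections. -/
lemma finrank_inf_bound [FiniteDimensional F V] {ι : Type*} [DecidableEq ι]
    (s : Finset ι) (f : ι → Submodule F V) :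
    Module.finrank F V ≤ Module.finrank F ↥(s.inf f) +
      ∑ i ∈ s, (Module.finrank F V - Module.finrank F (f i)) := by
  classical
  induction s using Finset.induction_on with
  | empty => rw [Finset.inf_empty, finrank_top]; simp
  | insert a s h ih =>
    rw [Finset.inf_insert, Finset.sum_insert h]
    have h1 := Submodule.finrank_sup_add_finrank_inf_eq (f a) (s.inf f)
    have h2 : Module.finrank F ↥(f a ⊔ s.inf f) ≤ Module.finrank F V := Submodule.finrank_le _
    have h3 : Module.finrank F ↥(f a) ≤ Module.finrank F V := Submodule.finrank_le _
    omega
end ModAux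


lemma commutator_central_mul {G : Type*} [Group G] {z1 z2 : G}
    (hz1 : z1 ∈ Subgroup.center G) (hz2 : z2 ∈ Subgroup.center G) (h1 h2 : G) :
    ⁅h1 * z1, h2 * z2⁆ = ⁅h1, h2⁆ := by
  have c1 : ∀ a : G, a * z1 = z1 * a := Subgroup.mem_center_iff.mp hz1
  have c2 : ∀ a : G, a * z2 = z2 * a := Subgroup.mem_center_iff.mp hz2
  have key2 : ∀ u : G, ⁅u, h2 * z2⁆ = ⁅u, h2⁆ := by
    intro u
    simp only [commutatorElement_def, mul_inv_rev]
    calc u * (h2 * z2) * u⁻¹ * (z2⁻¹ * h2⁻¹) = u * h2 * (z2 * u⁻¹ * z2⁻¹) * h2⁻¹ := by group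
      _ = u * h2 * (u⁻¹ * z2 * z2⁻¹) * h2⁻¹ := by rw [← c2 u⁻¹]
      _ = u * h2 * u⁻¹ * h2⁻¹ := by group
  rw [key2]
  simp only [commutatorElement_def, mul_inv_rev]
  calc h1 * z1 * h2 * (z1⁻¹ * h1⁻¹) * h2⁻¹ = h1 * (z1 * h2 * z1⁻¹) * h1⁻¹ * h2⁻¹ := by group
    _ = h1 * (h2 * z1 * z1⁻¹) * h1⁻¹ * h2⁻¹ := by rw [← c1 h2]
    _ = h1 * h2 * h1⁻¹ * h2⁻¹ := by group

theorem keyBound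
    (G : Type*) [Group G] [Finite G] (F : Type*) [Field F]
    (V : Type*) [AddCommGroup V] [Module F V] [FiniteDimensional F V]
    [DistribMulAction G V] [SMulCommClass G F V] [FaithfulSMul G V]
    (hirr : ∀ U : Submodule F V, (∀ (g : G) (v : V), v ∈ U → g • v ∈ U) → U = ⊥ ∨ U = ⊤)
    (T : Subgroup (G ⧸ Subgroup.center G)) [T.Normal] [IsSimpleGroup T]
    (hTc : Subgroup.centralizer (T : Set (G ⧸ Subgroup.center G)) = ⊥)
    (g : G) (hg : g ∉ Subgroup.center G) :
    Module.finrank F V ≤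
      rElt T ((g : G ⧸ Subgroup.center G)) *
        (Module.finrank F V - Module.finrank F (fixS F V g)) := by
  classical
  set x : G ⧸ Subgroup.center G := (g : G ⧸ Subgroup.center G) with hxdef
  have hx : x ≠ 1 := by
    simpa [hxdef, QuotientGroup.eq_one_iff] using hg
  have hmem : rElt T x ∈ {m : ℕ | ∃ c : Fin m → (G ⧸ Subgroup.center G),
      (∀ i, ∃ t ∈ T, c i = t * x * t⁻¹) ∧
      Subgroup.closure (Set.range c) = T ⊔ Subgroup.zpowers x} :=
    Nat.sInf_mem ⟨_, card_mem_rSet T hTc x hx⟩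
  obtain ⟨c, hc, hcl⟩ := hmem
  choose t ht hct using hc
  have hlift : ∀ i, ∃ a : G, (a : G ⧸ Subgroup.center G) = t i :=
    fun i => QuotientGroup.mk_surjective (t i)
  choose s hs using hlift
  set gg : Fin (rElt T x) → G := fun i => s i * g * (s i)⁻¹ with hggdef
  set f : Fin (rElt T x) → Submodule F V := fun i => fixS F V (gg i) with hfdef
  set π := QuotientGroup.mk' (Subgroup.center G) with hπdef
  set H : Subgroup G := Subgroup.closure (Set.range gg) with hHdef
  set N : Subgroup G := T.comap π with hNdef
  have hNnormal : N.Normal := Subgroup.Normal.comap ‹T.Normal› π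
  have hMnormal : (⁅N, N⁆ : Subgroup G).Normal :=
    @Subgroup.commutator_normal _ _ N N hNnormal hNnormal
  -- the image of H
  have hπgg : ∀ i, π (gg i) = c i := by
    intro i
    rw [hggdef]
    simp only [map_mul, map_inv, hπdef, QuotientGroup.mk'_apply]
    rw [hs i, ← hxdef, ← hct i]
  have hmapH : H.map π = T ⊔ Subgroup.zpowers x := by
    rw [hHdef, MonoidHom.map_closure, ← Set.range_comp,
      show π ∘ gg = c from funext hπgg, hcl]
  have hNle : N ≤ H ⊔ Subgroup.center G := by
    calc N ≤ (H.map π).comap π := by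
          rw [hmapH]; exact Subgroup.comap_mono le_sup_left
      _ = H ⊔ π.ker := Subgroup.comap_map_eq π H
      _ = H ⊔ Subgroup.center G := by rw [hπdef, QuotientGroup.ker_mk']
  have hMH : ⁅N, N⁆ ≤ H := by
    rw [Subgroup.commutator_le]
    intro a ha b hb
    have haH : a ∈ (H : Set G) * (Subgroup.center G : Set G) := by
      rw [← Subgroup.mul_normal H (Subgroup.center G)]
      exact hNle ha
    have hbH : b ∈ (H : Set G) * (Subgroup.center G : Set G) := by
      rw [← Subgroup.mul_normal H (Subgroup.center G)]
      exact hNle hb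
    obtain ⟨h1, hh1, z1, hz1, rfl⟩ := haH
    obtain ⟨h2, hh2, z2, hz2, rfl⟩ := hbH
    rw [commutator_central_mul hz1 hz2]
    show h1 * h2 * h1⁻¹ * h2⁻¹ ∈ H
    exact mul_mem (mul_mem (mul_mem hh1 hh2) (inv_mem hh1)) (inv_mem hh2)
  -- M is nontrivial since T is nonabelian
  have hMne : (⁅N, N⁆ : Subgroup G) ≠ ⊥ := by
    intro hMbot
    have hmapN : N.map π = T := by
      rw [hNdef]
      exact Subgroup.map_comap_eq_self_of_surjective (QuotientGroup.mk'_surjective _) T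
    have hTcomm : ∀ τ ∈ T, ∀ σ ∈ T, σ * τ = τ * σ := by
      intro τ hτ σ hσ
      rw [← hmapN] at hτ hσ
      obtain ⟨a, haN, rfl⟩ := hτ
      obtain ⟨b, hbN, rfl⟩ := hσ
      have : ⁅b, a⁆ ∈ (⁅N, N⁆ : Subgroup G) := Subgroup.commutator_mem_commutator hbN haN
      rw [hMbot, Subgroup.mem_bot, commutatorElement_eq_one_iff_mul_comm] at this
      rw [← map_mul, ← map_mul, this]
    have hTle : T ≤ Subgroup.centralizer (T : Set (G ⧸ Subgroup.center G)) := by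
      intro τ hτ
      rw [Subgroup.mem_centralizer_iff]
      exact fun σ hσ => hTcomm τ hτ σ hσ
    rw [hTc] at hTle
    obtain ⟨τ, hτT, hτ1⟩ := (Subgroup.nontrivial_iff_exists_ne_one T).mp inferInstance
    exact hτ1 (by simpa using hTle hτT)
  -- the common fixed space of M is an invariant subspace
  set U : Submodule F V := ⨅ (m : G) (_ : m ∈ (⁅N, N⁆ : Subgroup G)), fixS F V m with hUdef
  have hUmem : ∀ v : V, v ∈ U ↔ ∀ m ∈ (⁅N, N⁆ : Subgroup G), m • v = v := by
    intro v
    simp [hUdef, Submodule.mem_iInf]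
  have hUinv : ∀ (a : G) (v : V), v ∈ U → a • v ∈ U := by
    intro a v hv
    rw [hUmem] at hv ⊢
    intro m hm
    have hm' : a⁻¹ * m * a ∈ (⁅N, N⁆ : Subgroup G) := by
      have := hMnormal.conj_mem m hm a⁻¹
      simpa using this
    calc m • a • v = (a * (a⁻¹ * m * a)) • v := by
          rw [show a * (a⁻¹ * m * a) = m * a by group, mul_smul]
      _ = a • ((a⁻¹ * m * a) • v) := by rw [mul_smul]
      _ = a • v := by rw [hv _ hm']
  have hUbot : U = ⊥ := by
    rcases hirr U hUinv with h | h
    · exact h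
    · exfalso
      apply hMne
      rw [eq_bot_iff]
      intro m hm
      rw [Subgroup.mem_bot]
      refine eq_of_smul_eq_smul (M := G) (α := V) (fun v => ?_)
      rw [one_smul]
      have : (⊤ : Submodule F V) ≤ U := h ▸ le_rfl
      exact (hUmem v).mp (this trivial) m hm
  -- the intersection of the fixed spaces is trivial
  have hWbot : Finset.univ.inf f = ⊥ := by
    rw [eq_bot_iff]
    intro v hv
    rw [Submodule.mem_bot]
    have hvU : v ∈ U := by
      rw [hUmem]
      intro m hm
      have hHstab : H ≤ MulAction.stabilizer G v := by
        rw [hHdef, Subgroup.closure_le]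
        rintro - ⟨i, rfl⟩
        rw [SetLike.mem_coe, MulAction.mem_stabilizer_iff]
        have : v ∈ f i :=
          (Finset.inf_le (Finset.mem_univ i) : Finset.univ.inf f ≤ f i) hv
        exact this
      exact hHstab (hMH hm)
    rw [hUbot, Submodule.mem_bot] at hvU
    exact hvU
  -- counting dimensions
  have hcount := finrank_inf_bound F V Finset.univ f
  rw [hWbot] at hcount
  have hfr : ∀ i, Module.finrank F (f i) = Module.finrank F (fixS F V g) := by
    intro i
    rw [hfdef]
    exact finrank_fixS_conj F V (s i) g
  rw [finrank_bot, zero_add] at hcount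
  calc Module.finrank F V
      ≤ ∑ i : Fin (rElt T x), (Module.finrank F V - Module.finrank F (f i)) := hcount
    _ = ∑ _i : Fin (rElt T x), (Module.finrank F V - Module.finrank F (fixS F V g)) := by
        refine Finset.sum_congr rfl fun i _ => by rw [hfr i]
    _ = (rElt T x) * (Module.finrank F V - Module.finrank F (fixS F V g)) := by
        rw [Finset.sum_const, Finset.card_univ, Fintype.card_fin, smul_eq_mul]


/-- `rGroup G T = max{rElt T ḡ : g ∈ G \ Z(G)}`. -/
noncomputable def rGroup (G : Type*) [Group G] (T : Subgroup (G ⧸ Subgroup.center G)) : ℕ :=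
  sSup {m : ℕ | ∃ g : G, g ∉ Subgroup.center G ∧ m = rElt T ((g : G ⧸ Subgroup.center G))}

/-- If an almost quasisimple group `G` (with `T` the socle of `G/Z(G)`: a simple
normal subgroup with trivial centraliser) has no regular orbit on a faithful
irreducible `F_q G`-module `V`, then `dim V ≤ r(G) · log_q |G|`. -/
theorem dim_le_of_no_regular_orbit
    (G : Type*) [Group G] [Finite G] (F : Type*) [Field F] [Fintype F]
    (V : Type*) [AddCommGroup V] [Module F V] [FiniteDimensional F V]
    [DistribMulAction G V] [SMulCommClass G F V] [FaithfulSMul G V]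
    (hirr : ∀ U : Submodule F V, (∀ (g : G) (v : V), v ∈ U → g • v ∈ U) → U = ⊥ ∨ U = ⊤)
    (T : Subgroup (G ⧸ Subgroup.center G)) [T.Normal] [IsSimpleGroup T]
    (hTc : Subgroup.centralizer (T : Set (G ⧸ Subgroup.center G)) = ⊥)
    (hno : ¬ ∃ v : V, ∀ g : G, g • v = v → g = 1) :
    (Module.finrank F V : ℝ) ≤
      (rGroup G T : ℝ) * (Real.log (Nat.card G) / Real.log (Fintype.card F)) := by
  classical
  have hq1 : 1 < Fintype.card F := Fintype.one_lt_card
  set d := Module.finrank F V with hd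
  haveI : Finite V := Module.finite_of_finite F
  haveI : Fintype V := Fintype.ofFinite V
  haveI : Fintype G := Fintype.ofFinite G
  have hn1 : 1 ≤ Nat.card G := Nat.one_le_iff_ne_zero.mpr Nat.card_pos.ne'
  have hlogq : 0 < Real.log (Fintype.card F) := Real.log_pos (by exact_mod_cast hq1)
  rcases Nat.eq_zero_or_pos d with hd0 | hdpos
  · rw [hd0]
    push_cast
    apply mul_nonneg (Nat.cast_nonneg _)
    exact div_nonneg (Real.log_nonneg (by exact_mod_cast hn1)) hlogq.le
  -- a noncentral element exists
  obtain ⟨τ, hτT, hτ1⟩ := (Subgroup.nontrivial_iff_exists_ne_one T).mp inferInstance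
  obtain ⟨g0, hg0τ⟩ := QuotientGroup.mk_surjective τ
  have hg0 : g0 ∉ Subgroup.center G := by
    intro h
    exact hτ1 (hg0τ ▸ (QuotientGroup.eq_one_iff g0).mpr h)
  -- `rGroup` dominates each `rElt`
  have hbdd : BddAbove {m : ℕ | ∃ g : G, g ∉ Subgroup.center G ∧
      m = rElt T ((g : G ⧸ Subgroup.center G))} := by
    refine ⟨Nat.card T, ?_⟩
    rintro m ⟨g, hg, rfl⟩
    have hx : (g : G ⧸ Subgroup.center G) ≠ 1 := by
      simpa [QuotientGroup.eq_one_iff] using hg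
    exact Nat.sInf_le (card_mem_rSet T hTc _ hx)
  have hRle : ∀ g : G, g ∉ Subgroup.center G →
      rElt T ((g : G ⧸ Subgroup.center G)) ≤ rGroup G T :=
    fun g hg => le_csSup hbdd ⟨g, hg, rfl⟩
  set R := rGroup G T with hR
  -- R ≥ 1
  have h00 := keyBound G F V hirr T hTc g0 hg0
  have hR1 : 1 ≤ R := by
    refine le_trans (Nat.one_le_iff_ne_zero.mpr ?_) (hRle g0 hg0)
    intro h
    rw [h, zero_mul] at h00
    omega
  -- key bound for every nontrivial element
  have hkey : ∀ g : G, g ≠ 1 → d ≤ R * (d - Module.finrank F (fixS F V g)) := by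
    intro g hg1
    by_cases hgc : g ∈ Subgroup.center G
    · have hinv : ∀ (a : G) (v : V), v ∈ fixS F V g → a • v ∈ fixS F V g := by
        intro a v hv
        have hv' : g • v = v := hv
        show g • (a • v) = a • v
        calc g • a • v = (g * a) • v := (mul_smul g a v).symm
          _ = (a * g) • v := by rw [← Subgroup.mem_center_iff.mp hgc a]
          _ = a • (g • v) := mul_smul a g v
          _ = a • v := by rw [hv']
      have hfix : fixS F V g = ⊥ := by
        rcases hirr (fixS F V g) hinv with h | h
        · exact h
        · exfalso
          apply hg1
          refine eq_of_smul_eq_smul (M := G) (α := V) fun v => ?_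
          rw [one_smul]
          exact (h ▸ Submodule.mem_top : v ∈ fixS F V g)
      rw [hfix, finrank_bot, Nat.sub_zero]
      calc d = 1 * d := (one_mul d).symm
        _ ≤ R * d := Nat.mul_le_mul_right d hR1
    · exact le_trans (keyBound G F V hirr T hTc g hgc)
        (Nat.mul_le_mul_right _ (hRle g hgc))
  -- counting
  have hcover : ∀ v : V, ∃ g : G, g ≠ 1 ∧ v ∈ fixS F V g := by
    push_neg at hno
    intro v
    obtain ⟨g, hgv, hg1⟩ := hno v
    exact ⟨g, hg1, hgv⟩
  set q := Fintype.card F with hq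
  have hcardV : Fintype.card V = q ^ d := Module.card_eq_pow_finrank
  have hcardW : ∀ W : Submodule F V, Nat.card W = q ^ Module.finrank F W := by
    intro W
    haveI : Fintype W := Fintype.ofFinite W
    rw [Nat.card_eq_fintype_card]
    exact Module.card_eq_pow_finrank
  have hsub : (Finset.univ : Finset V) ⊆
      (Finset.univ.erase (1 : G)).biUnion (fun g => (fixS F V g : Set V).toFinset) := by
    intro v _
    obtain ⟨g, hg1, hgv⟩ := hcover v
    exact Finset.mem_biUnion.mpr ⟨g, Finset.mem_erase.mpr ⟨hg1, Finset.mem_univ g⟩,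
      Set.mem_toFinset.mpr hgv⟩
  have hcard1 : q ^ d ≤ ∑ g ∈ Finset.univ.erase (1 : G), q ^ Module.finrank F (fixS F V g) := by
    calc q ^ d = (Finset.univ : Finset V).card := by rw [Finset.card_univ, hcardV]
      _ ≤ ((Finset.univ.erase (1 : G)).biUnion
            (fun g => (fixS F V g : Set V).toFinset)).card := Finset.card_le_card hsub
      _ ≤ ∑ g ∈ Finset.univ.erase (1 : G), ((fixS F V g : Set V)).toFinset.card :=
          Finset.card_biUnion_le
      _ = ∑ g ∈ Finset.univ.erase (1 : G), q ^ Module.finrank F (fixS F V g) := by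
          refine Finset.sum_congr rfl fun g _ => ?_
          rw [Set.toFinset_card, ← Nat.card_eq_fintype_card]
          exact hcardW (fixS F V g)
  -- pass to the reals
  set QR : ℝ := (q : ℝ) with hQR
  have hQ0 : (0 : ℝ) < QR := by rw [hQR]; exact_mod_cast Nat.zero_lt_of_lt hq1
  have hQ1 : (1 : ℝ) < QR := by rw [hQR]; exact_mod_cast hq1
  set A : ℝ := (d : ℝ) with hA
  have hApos : (0:ℝ) < A := by rw [hA]; exact_mod_cast hdpos
  have hRr : (0:ℝ) < (R:ℝ) := by exact_mod_cast hR1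
  have hexp : ∀ g : G, g ≠ 1 → (Module.finrank F (fixS F V g) : ℝ) ≤ A - A / (R:ℝ) := by
    intro g hg1
    have h1 := hkey g hg1
    have hkd : Module.finrank F (fixS F V g) ≤ d := Submodule.finrank_le _
    set k := Module.finrank F (fixS F V g) with hk
    have h2 : A ≤ (R:ℝ) * (A - (k:ℝ)) := by
      calc A = ((d : ℕ) : ℝ) := rfl
        _ ≤ ((R * (d - k) : ℕ) : ℝ) := by exact_mod_cast h1
        _ = (R:ℝ) * (A - (k:ℝ)) := by push_cast [Nat.cast_sub hkd]; ring
    have h3 : A / (R:ℝ) ≤ A - (k:ℝ) := by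
      rw [div_le_iff₀ hRr]
      nlinarith
    linarith
  have hsumR : QR ^ A ≤ ((Finset.univ.erase (1:G)).card : ℝ) * QR ^ (A - A / (R:ℝ)) := by
    calc QR ^ A = ((q ^ d : ℕ) : ℝ) := by
          rw [hA, Real.rpow_natCast]; push_cast; ring
      _ ≤ ((∑ g ∈ Finset.univ.erase (1:G), q ^ Module.finrank F (fixS F V g) : ℕ) : ℝ) := by
          exact_mod_cast hcard1
      _ = ∑ g ∈ Finset.univ.erase (1:G), ((q ^ Module.finrank F (fixS F V g) : ℕ) : ℝ) := by
          push_cast; ring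
      _ ≤ ∑ _g ∈ Finset.univ.erase (1:G), QR ^ (A - A / (R:ℝ)) := by
          refine Finset.sum_le_sum fun g hg => ?_
          have hg1 : g ≠ 1 := (Finset.mem_erase.mp hg).1
          calc ((q ^ Module.finrank F (fixS F V g) : ℕ) : ℝ)
              = QR ^ ((Module.finrank F (fixS F V g) : ℕ) : ℝ) := by
                rw [Real.rpow_natCast]; push_cast; ring
            _ ≤ QR ^ (A - A / (R:ℝ)) :=
                Real.rpow_le_rpow_of_exponent_le hQ1.le (hexp g hg1)
      _ = _ := by rw [Finset.sum_const, nsmul_eq_mul]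
  have hQdr : QR ^ (A / (R:ℝ)) ≤ (Nat.card G : ℝ) := by
    have hsplit : QR ^ A = QR ^ (A / (R:ℝ)) * QR ^ (A - A / (R:ℝ)) := by
      rw [← Real.rpow_add hQ0]; ring_nf
    have hpow : (0:ℝ) < QR ^ (A - A / (R:ℝ)) := Real.rpow_pos_of_pos hQ0 _
    have h2 : QR ^ (A / (R:ℝ)) ≤ ((Finset.univ.erase (1:G)).card : ℝ) := by
      rw [hsplit] at hsumR
      exact le_of_mul_le_mul_right hsumR hpow
    have h3 : ((Finset.univ.erase (1:G)).card : ℝ) ≤ (Nat.card G : ℝ) := by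
      have h4 : (Finset.univ.erase (1:G)).card ≤ Fintype.card G :=
        le_trans (Finset.card_erase_le) (le_of_eq Finset.card_univ)
      have h5 : Nat.card G = Fintype.card G := Nat.card_eq_fintype_card
      exact_mod_cast h5 ▸ h4
    linarith
  have hlog : (A / (R:ℝ)) * Real.log QR ≤ Real.log (Nat.card G) := by
    rw [← Real.log_rpow hQ0]
    exact Real.log_le_log (Real.rpow_pos_of_pos hQ0 _) hQdr
  have hfin : A / (R:ℝ) ≤ Real.log (Nat.card G) / Real.log QR := by
    rw [le_div_iff₀ hlogq]
    exact hlog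
  calc (d:ℝ) = (R:ℝ) * (A / (R:ℝ)) := by field_simp; exact hA.symm
    _ ≤ (R:ℝ) * (Real.log (Nat.card G) / Real.log QR) :=
        mul_le_mul_of_nonneg_left hfin hRr.le
end
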